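/- For every positive integer j, ∫₀^{π/2} exp(cos^j θ · cos(jθ)) · cos(cos^j θ · sin(jθ)) dθ = (π/2) · e^{1/2^j}. -/

import Mathlib

open Real intervalIntegral

lemma cos_pow_integral (m : ℕ) :
    ∫ θ in (0:ℝ)..(Real.pi/2), Real.cos θ ^ m * Real.cos (m * θ) = Real.pi / 2 ^ (m + 1) := by
  induction m with
  | zero => simp
  | succ m ih =>
    have key : ∀ θ : ℝ, HasDerivAt (fun θ : ℝ => Real.cos θ ^ (m+1) * Real.sin ((m+1 : ℕ) * θ))
        (((m:ℝ)+1) * (2 * (Real.cos θ ^ (m+1) * Real.cos ((m+1 : ℕ) * θ))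
          - Real.cos θ ^ m * Real.cos (m * θ))) θ := by
      intro θ
      have h1 : HasDerivAt (fun θ : ℝ => Real.cos θ ^ (m+1))
          (((m:ℝ)+1) * Real.cos θ ^ m * (-Real.sin θ)) θ := by
        have := (Real.hasDerivAt_cos θ).fun_pow (m+1)
        simpa [Nat.add_sub_cancel] using this
      have h2 : HasDerivAt (fun θ : ℝ => Real.sin ((m+1 : ℕ) * θ))
          (Real.cos ((m+1 : ℕ) * θ) * ((m:ℝ)+1)) θ := by
        have := (Real.hasDerivAt_sin (((m+1:ℕ):ℝ) * θ)).comp θ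
          ((hasDerivAt_id θ).const_mul ((m+1:ℕ):ℝ))
        simpa [Function.comp_def, mul_comm] using this
      have := h1.fun_mul h2
      refine this.congr_deriv ?_
      have hcs : Real.cos ((m:ℝ) * θ) = Real.cos θ * Real.cos (((m:ℕ)+1:ℕ) * θ)
          + Real.sin θ * Real.sin (((m:ℕ)+1:ℕ) * θ) := by
        have : ((m:ℝ)) * θ = (((m:ℕ)+1:ℕ):ℝ) * θ - θ := by push_cast; ring
        rw [this, Real.cos_sub]; ring
      push_cast at hcs ⊢
      rw [hcs]
      ring
    have hint : IntervalIntegrable (fun θ => ((m:ℝ)+1) * (2 * (Real.cos θ ^ (m+1) * Real.cos ((m+1 : ℕ) * θ))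
          - Real.cos θ ^ m * Real.cos (m * θ))) MeasureTheory.volume 0 (Real.pi/2) := by
      apply Continuous.intervalIntegrable; fun_prop
    have h0 : ∫ θ in (0:ℝ)..(Real.pi/2), ((m:ℝ)+1) * (2 * (Real.cos θ ^ (m+1) * Real.cos ((m+1 : ℕ) * θ))
          - Real.cos θ ^ m * Real.cos (m * θ)) = 0 := by
      rw [integral_eq_sub_of_hasDerivAt (fun θ _ => key θ) hint]
      simp
    have hi1 : IntervalIntegrable (fun θ => Real.cos θ ^ (m+1) * Real.cos ((m+1 : ℕ) * θ)) MeasureTheory.volume 0 (Real.pi/2) := by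
      apply Continuous.intervalIntegrable; fun_prop
    have hi2 : IntervalIntegrable (fun θ => Real.cos θ ^ m * Real.cos ((m:ℕ) * θ)) MeasureTheory.volume 0 (Real.pi/2) := by
      apply Continuous.intervalIntegrable; fun_prop
    rw [integral_const_mul, integral_sub ((hi1.const_mul 2)) hi2, integral_const_mul, ih] at h0
    have hm : ((m:ℝ)+1) ≠ 0 := by positivity
    have := mul_eq_zero.mp h0
    rcases this with h | h
    · exact absurd h hm
    · have hI : ∫ θ in (0:ℝ)..(Real.pi/2), Real.cos θ ^ (m+1) * Real.cos ((m+1 : ℕ) * θ)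
          = Real.pi / 2 ^ (m+1) / 2 := by linarith
      rw [hI, pow_succ]
      ring

lemma pointwise_hasSum (j : ℕ) (θ : ℝ) :
    HasSum (fun n : ℕ => Real.cos θ ^ (j*n) * Real.cos (((j*n : ℕ) : ℝ) * θ) / (n.factorial))
      (Real.exp (Real.cos θ ^ j * Real.cos ((j:ℝ) * θ)) *
        Real.cos (Real.cos θ ^ j * Real.sin ((j:ℝ) * θ))) := by
  set w : ℂ := ((Real.cos θ ^ j : ℝ) : ℂ) * Complex.exp ((((j:ℝ) * θ : ℝ) : ℂ) * Complex.I) with hw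
  have hsum : HasSum (fun n : ℕ => w ^ n / (n.factorial)) (Complex.exp w) := by
    rw [Complex.exp_eq_exp_ℂ]
    exact NormedSpace.expSeries_div_hasSum_exp w
  have hre := hsum.mapL Complex.reCLM
  have h1 : ∀ n : ℕ, Complex.reCLM (w ^ n / (n.factorial))
      = Real.cos θ ^ (j*n) * Real.cos (((j*n : ℕ) : ℝ) * θ) / (n.factorial) := by
    intro n
    have harg : (n:ℂ) * ((((j:ℝ) * θ : ℝ) : ℂ) * Complex.I)
        = ((((j*n:ℕ):ℝ) * θ : ℝ) : ℂ) * Complex.I := by push_cast; ring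
    have hd : w ^ n / ((n.factorial : ℕ) : ℂ)
        = ((Real.cos θ ^ (j*n) / (n.factorial) : ℝ) : ℂ)
          * Complex.exp (((((j*n:ℕ):ℝ) * θ : ℝ) : ℂ) * Complex.I) := by
      rw [hw, mul_pow, ← Complex.exp_nat_mul, harg, ← Complex.ofReal_pow, ← pow_mul]
      push_cast
      ring
    simp only [Complex.reCLM_apply, hd, Complex.re_ofReal_mul, Complex.exp_ofReal_mul_I_re]
    ring
  have h2 : Complex.reCLM (Complex.exp w)
      = Real.exp (Real.cos θ ^ j * Real.cos ((j:ℝ) * θ)) *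
        Real.cos (Real.cos θ ^ j * Real.sin ((j:ℝ) * θ)) := by
    simp only [Complex.reCLM_apply, Complex.exp_re, hw]
    rw [Complex.re_ofReal_mul, Complex.im_ofReal_mul,
      Complex.exp_ofReal_mul_I_re, Complex.exp_ofReal_mul_I_im]
  rw [← h2]
  exact hre.congr_fun fun n => (h1 n).symm

theorem stmt_9 (j : ℕ) (hj : 0 < j) :
    ∫ θ in (0:ℝ)..(Real.pi / 2),
        Real.exp (Real.cos θ ^ j * Real.cos (j * θ)) *
          Real.cos (Real.cos θ ^ j * Real.sin (j * θ))
      = Real.pi / 2 * Real.exp (1 / 2 ^ j) := by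
  have hle : (0:ℝ) ≤ Real.pi / 2 := by positivity
  set F : ℕ → ℝ → ℝ := fun n θ =>
    Real.cos θ ^ (j*n) * Real.cos (((j*n : ℕ) : ℝ) * θ) / (n.factorial) with hF
  set μ := MeasureTheory.volume.restrict (Set.Ioc (0:ℝ) (Real.pi/2)) with hμ
  have hFc : ∀ n, Continuous (F n) := by intro n; fun_prop
  have hF_int : ∀ n, MeasureTheory.Integrable (F n) μ := fun n =>
    (hFc n).integrableOn_Ioc
  have hμuniv : (μ Set.univ).toReal = Real.pi / 2 := by
    rw [hμ, MeasureTheory.Measure.restrict_apply_univ, Real.volume_Ioc]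
    simp [ENNReal.toReal_ofReal hle]
  have hbound : ∀ n, (∫ θ, ‖F n θ‖ ∂μ) ≤ Real.pi / 2 * (1 / n.factorial) := by
    intro n
    have h1 : ∀ θ, ‖F n θ‖ ≤ 1 / n.factorial := by
      intro θ
      rw [hF]
      simp only [Real.norm_eq_abs, abs_div, Nat.abs_cast]
      apply div_le_div_of_nonneg_right ?_ (by positivity) |>.trans_eq rfl
      · calc |Real.cos θ ^ (j*n) * Real.cos (((j*n : ℕ) : ℝ) * θ)|
            ≤ |Real.cos θ ^ (j*n)| * |Real.cos (((j*n : ℕ) : ℝ) * θ)| := by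
              rw [abs_mul]
          _ ≤ 1 * 1 := by
              apply mul_le_mul ?_ (Real.abs_cos_le_one _) (abs_nonneg _) zero_le_one
              rw [abs_pow]
              exact pow_le_one₀ (abs_nonneg _) (Real.abs_cos_le_one _)
          _ = 1 := one_mul 1
    calc (∫ θ, ‖F n θ‖ ∂μ) ≤ ∫ _θ, (1 / n.factorial : ℝ) ∂μ := by
          apply MeasureTheory.integral_mono ((hF_int n).norm) _ h1
          exact MeasureTheory.integrable_const _
      _ = Real.pi / 2 * (1 / n.factorial) := by
          rw [MeasureTheory.integral_const, smul_eq_mul, MeasureTheory.measureReal_def, hμuniv]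
  have hsummable : Summable (fun n : ℕ => ∫ θ, ‖F n θ‖ ∂μ) := by
    apply Summable.of_nonneg_of_le
      (fun n => MeasureTheory.integral_nonneg fun θ => norm_nonneg _) hbound
    have := (Real.summable_pow_div_factorial 1).mul_left (Real.pi / 2)
    simpa using this
  have key := MeasureTheory.hasSum_integral_of_summable_integral_norm hF_int hsummable
  have hptwise : ∀ θ : ℝ, (∑' n, F n θ)
      = Real.exp (Real.cos θ ^ j * Real.cos ((j:ℝ) * θ)) *
        Real.cos (Real.cos θ ^ j * Real.sin ((j:ℝ) * θ)) :=
    fun θ => (pointwise_hasSum j θ).tsum_eq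
  have hFn_val : ∀ n : ℕ, (∫ θ, F n θ ∂μ) = Real.pi / 2 * ((1 / 2 ^ j : ℝ) ^ n / n.factorial) := by
    intro n
    have : (∫ θ, F n θ ∂μ)
        = ∫ θ in (0:ℝ)..(Real.pi/2), Real.cos θ ^ (j*n) * Real.cos (((j*n : ℕ) : ℝ) * θ) / (n.factorial) := by
      rw [intervalIntegral.integral_of_le hle, hμ]
    rw [this, intervalIntegral.integral_div, cos_pow_integral (j*n)]
    rw [div_pow, one_pow, ← pow_mul, pow_succ]
    ring
  have target : HasSum (fun n : ℕ => Real.pi / 2 * ((1 / 2 ^ j : ℝ) ^ n / n.factorial))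
      (Real.pi / 2 * Real.exp (1 / 2 ^ j)) := by
    have h := NormedSpace.expSeries_div_hasSum_exp ((1:ℝ) / 2 ^ j)
    rw [← Real.exp_eq_exp_ℝ] at h
    exact h.mul_left _
  have hfe : (fun n : ℕ => ∫ θ, F n θ ∂μ)
      = fun n : ℕ => Real.pi / 2 * ((1 / 2 ^ j : ℝ) ^ n / n.factorial) := funext hFn_val
  rw [hfe] at key
  have := key.unique target
  rw [intervalIntegral.integral_of_le hle]
  rw [← this]
  apply MeasureTheory.integral_congr_ae
  filter_upwards with θ
  rw [hptwise θ]
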